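/- In NIM with Cash with subtraction set A = {1, 2} and n ≡ 3 (mod 6), if d < M₁(n) + 1 = (n+1)/2 + 1 and e ≥ M₂(n) = (n+1)/2, then Player 2 wins NIM({1,2}; n; d, e). -/
import Mathlib

private def LL (n m m' : ℕ) : Prop :=
  (n % 3 = 0 ∨ m < n - n / 3) ∧ min m (n - n / 3) ≤ m'

private lemma LL_key (n m m' : ℕ) :
    LL n m m' ↔
      ((1 ≤ n → 1 ≤ m → ¬ LL (n - 1) m' (m - 1)) ∧
       (2 ≤ n → 2 ≤ m → ¬ LL (n - 2) m' (m - 2))) := by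
  unfold LL; omega

private lemma notW_iff_LL (W : ℕ → ℕ → ℕ → Prop)
    (hW : ∀ n m m', W n m m' ↔
      ∃ a ∈ ({1, 2} : Finset ℕ), a ≤ n ∧ a ≤ m ∧ ¬ W (n - a) m' (m - a)) :
    ∀ n m m', ¬ W n m m' ↔ LL n m m' := by
  intro n
  induction n using Nat.strong_induction_on with
  | _ n ih =>
    intro m m'
    rw [hW]
    push_neg
    simp only [Finset.mem_insert, Finset.mem_singleton, forall_eq_or_imp, forall_eq]
    constructor
    · rintro ⟨h1, h2⟩
      rw [LL_key]
      constructor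
      · intro hn hm
        rw [← ih (n - 1) (by omega) m' (m - 1), not_not]
        exact h1 hn hm
      · intro hn hm
        rw [← ih (n - 2) (by omega) m' (m - 2), not_not]
        exact h2 hn hm
    · intro h
      rw [LL_key] at h
      refine ⟨fun hn hm => ?_, fun hn hm => ?_⟩
      · have := h.1 hn hm
        rw [← ih (n - 1) (by omega) m' (m - 1), not_not] at this
        exact this
      · have := h.2 hn hm
        rw [← ih (n - 2) (by omega) m' (m - 2), not_not] at this
        exact this

/-- NIM with Cash, A = {1,2}, n ≡ 3 (mod 6): if d < (n+1)/2 + 1 and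
e ≥ (n+1)/2, then Player 2 wins. -/
theorem nimCash_12_mod6_3_p2_wins (W : ℕ → ℕ → ℕ → Prop)
    (hW : ∀ n m m', W n m m' ↔
      ∃ a ∈ ({1, 2} : Finset ℕ), a ≤ n ∧ a ≤ m ∧ ¬ W (n - a) m' (m - a))
    (n d e : ℕ) (hn : n % 6 = 3)
    (hd : d < (n + 1) / 2 + 1) (he : (n + 1) / 2 ≤ e) :
    ¬ W n d e := by
  rw [notW_iff_LL W hW]
  unfold LL
  omega
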